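/- Let (f_n) be a sequence in H, W the closure of the domain of its analysis operator, P_W the orthogonal projection onto W, and J : W → H a unitary. If there are weights ω_n > 1 such that (ω_n J P_W f_n) is a lower semi frame for H with bound A, then (ω_n f_n) is a lower semi frame for H with bound A. -/

import Mathlib

open scoped ENNReal NNReal

/-- The Bessel-type sum `∑ₙ |⟨f, gₙ⟩|²` valued in `ℝ≥0∞`. -/
noncomputable def bSum {H : Type*} [NormedAddCommGroup H] [InnerProductSpace ℂ H]
    (g : ℕ → H) (f : H) : ℝ≥0∞ :=
  ∑' n, ((‖(inner ℂ f (g n) : ℂ)‖₊ : ℝ≥0∞)) ^ 2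

theorem stmt18 {H : Type*} [NormedAddCommGroup H] [InnerProductSpace ℂ H] [CompleteSpace H]
    [TopologicalSpace.SeparableSpace H] (hinf : ¬ FiniteDimensional ℂ H)
    (F : ℕ → H) (W : Submodule ℂ H)
    (hW : (W : Set H) = closure {f : H | bSum F f ≠ ⊤})
    (P : H →ₗ[ℂ] H) (hPmem : ∀ x : H, P x ∈ W) (hPid : ∀ x ∈ W, P x = x)
    (hPorth : ∀ x : H, x - P x ∈ Wᗮ)
    (J : W ≃ₗᵢ[ℂ] H)
    (ω : ℕ → ℝ) (hω : ∀ n, 1 < ω n) (A : ℝ) (hA : 0 < A)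
    (hlow : ∀ f : H, ENNReal.ofReal A * (‖f‖₊ : ℝ≥0∞) ^ 2
      ≤ bSum (fun n => ((ω n : ℝ) : ℂ) • J ⟨P (F n), hPmem (F n)⟩) f) :
    ∀ f : H, ENNReal.ofReal A * (‖f‖₊ : ℝ≥0∞) ^ 2
      ≤ bSum (fun n => ((ω n : ℝ) : ℂ) • F n) f := by
  intro f
  by_cases hS : bSum (fun n => ((ω n : ℝ) : ℂ) • F n) f = ⊤
  · rw [hS]; exact le_top
  -- each plain term is dominated by the weighted term
  have hterm : ∀ n, ((‖(inner ℂ f (F n) : ℂ)‖₊ : ℝ≥0∞)) ^ 2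
      ≤ ((‖(inner ℂ f (((ω n : ℝ) : ℂ) • F n) : ℂ)‖₊ : ℝ≥0∞)) ^ 2 := by
    intro n
    have h1 : (inner ℂ f (((ω n : ℝ) : ℂ) • F n) : ℂ) = (ω n : ℂ) * inner ℂ f (F n) :=
      inner_smul_right _ _ _
    rw [h1, nnnorm_mul]
    have hω1 : (1 : ℝ≥0) ≤ ‖((ω n : ℝ) : ℂ)‖₊ := by
      rw [Complex.nnnorm_real]
      have : (1 : ℝ) ≤ ‖ω n‖ := by
        rw [Real.norm_eq_abs, abs_of_pos (lt_trans one_pos (hω n))]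
        exact le_of_lt (hω n)
      exact this
    gcongr
    exact le_mul_of_one_le_left zero_le hω1
  have hfin : bSum F f ≠ ⊤ :=
    ne_top_of_le_ne_top hS (ENNReal.tsum_le_tsum hterm)
  have hfW : f ∈ W := by
    have : f ∈ (W : Set H) := by
      rw [hW]; exact subset_closure hfin
    exact this
  -- rewrite each inner product through the projection and J
  have hkey : ∀ n, (inner ℂ f (((ω n : ℝ) : ℂ) • F n) : ℂ)
      = inner ℂ (J ⟨f, hfW⟩) (((ω n : ℝ) : ℂ) • J ⟨P (F n), hPmem (F n)⟩) := by
    intro n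
    rw [inner_smul_right, inner_smul_right, LinearIsometryEquiv.inner_map_map]
    congr 1
    have h0 : (inner ℂ f (F n - P (F n)) : ℂ) = 0 :=
      (Submodule.mem_orthogonal W _).1 (hPorth (F n)) f hfW
    rw [inner_sub_right, sub_eq_zero] at h0
    have hco : (inner ℂ (⟨f, hfW⟩ : W) (⟨P (F n), hPmem (F n)⟩ : W) : ℂ)
        = (inner ℂ f (P (F n)) : ℂ) := rfl
    rw [hco, h0]
  have hnorm : ‖J ⟨f, hfW⟩‖₊ = ‖f‖₊ := by
    simp [nnnorm]
  have hb : bSum (fun n => ((ω n : ℝ) : ℂ) • J ⟨P (F n), hPmem (F n)⟩) (J ⟨f, hfW⟩)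
      = bSum (fun n => ((ω n : ℝ) : ℂ) • F n) f := by
    unfold bSum
    refine tsum_congr fun n => ?_
    rw [hkey n]
  calc ENNReal.ofReal A * (‖f‖₊ : ℝ≥0∞) ^ 2
      = ENNReal.ofReal A * (‖J ⟨f, hfW⟩‖₊ : ℝ≥0∞) ^ 2 := by rw [hnorm]
    _ ≤ bSum (fun n => ((ω n : ℝ) : ℂ) • J ⟨P (F n), hPmem (F n)⟩) (J ⟨f, hfW⟩) :=
        hlow _
    _ = bSum (fun n => ((ω n : ℝ) : ℂ) • F n) f := hb
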